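/- arXiv:1506.09007 — 2 statements merged into one kernel-verified Lean document; each statement's English description precedes it below -/
import Mathlib

section
/- For every p > 1 there exist constants 0 < c_p ≤ C_p < ∞ such that for all real a, b: c_p·(b-a)^2·(max(|a|,|b|))^{p-2} ≤ F(a,b) ≤ C_p·(b-a)^2·(max(|a|,|b|))^{p-2}, where F(a,b) = |b|^p - |a|^p - p·a·|a|^{p-2}·(b-a). -/
open Real

namespace FTwoAux

noncomputable def psiF (p t : ℝ) : ℝ := t * |t| ^ (p - 2)

variable {p : ℝ}

lemma rpow_grad_ge {q : ℝ} (hq : 1 ≤ q) {u v : ℝ} (hu : 0 ≤ u) (hv : 0 < v) :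
    v ^ q + q * (u - v) * v ^ (q - 1) ≤ u ^ q := by
  have hs : (-1 : ℝ) ≤ u / v - 1 := by
    have : 0 ≤ u / v := div_nonneg hu hv.le
    linarith
  have h := one_add_mul_self_le_rpow_one_add hs hq
  rw [show (1 : ℝ) + (u / v - 1) = u / v by ring] at h
  have hvq : (0:ℝ) < v ^ q := Real.rpow_pos_of_pos hv q
  have h2 := mul_le_mul_of_nonneg_right h hvq.le
  rw [Real.div_rpow hu hv.le, div_mul_cancel₀ _ (ne_of_gt hvq)] at h2
  have hq1 : v ^ (q - 1) = v ^ q / v := by rw [Real.rpow_sub hv, Real.rpow_one]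
  calc v ^ q + q * (u - v) * v ^ (q - 1)
      = (1 + q * (u / v - 1)) * v ^ q := by rw [hq1]; field_simp
    _ ≤ u ^ q := h2

lemma rpow_grad_le {q : ℝ} (hq0 : 0 ≤ q) (hq : q ≤ 1) {u v : ℝ} (hu : 0 ≤ u) (hv : 0 < v) :
    u ^ q ≤ v ^ q + q * (u - v) * v ^ (q - 1) := by
  have h := Real.geom_mean_le_arith_mean2_weighted hq0 (by linarith : (0:ℝ) ≤ 1 - q)
      (div_nonneg hu hv.le) zero_le_one (by ring)
  rw [Real.one_rpow, mul_one] at h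
  have hvq : (0:ℝ) < v ^ q := Real.rpow_pos_of_pos hv q
  have h2 := mul_le_mul_of_nonneg_right h hvq.le
  rw [Real.div_rpow hu hv.le, div_mul_cancel₀ _ (ne_of_gt hvq)] at h2
  have hq1 : v ^ (q - 1) = v ^ q / v := by rw [Real.rpow_sub hv, Real.rpow_one]
  calc u ^ q ≤ (q * (u/v) + (1 - q) * 1) * v ^ q := h2
    _ = v ^ q + q * (u - v) * v ^ (q - 1) := by rw [hq1]; field_simp; ring

lemma pow_diff_upper (hp : 1 < p) {u v : ℝ} (hu : 0 ≤ u) (huv : u ≤ v) :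
    v ^ (p-1) - u ^ (p-1) ≤ max (p-1) 1 * (v - u) * v ^ (p-2) := by
  rcases eq_or_lt_of_le (hu.trans huv) with hv | hv
  · have hu0 : u = 0 := le_antisymm (huv.trans hv.symm.le) hu
    simp [← hv, hu0]
  rcases le_or_gt 2 p with h2 | h2
  · rw [max_eq_left (by linarith)]
    have h := rpow_grad_ge (q := p-1) (by linarith) hu hv
    rw [show p-1-1 = p-2 by ring] at h
    linarith
  · rw [max_eq_right (by linarith)]
    have hv1 : v ^ (p-1) = v * v^(p-2) := by
      rw [show p-1 = 1+(p-2) by ring, Real.rpow_add hv, Real.rpow_one]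
    have hu1 : u * v^(p-2) ≤ u^(p-1) := by
      rcases eq_or_lt_of_le hu with rfl | hu0
      · simp [Real.zero_rpow (show p-1 ≠ 0 by intro h; linarith)]
      · have : v^(p-2) ≤ u^(p-2) := Real.rpow_le_rpow_of_nonpos hu0 huv (by linarith)
        have h3 : u * v^(p-2) ≤ u * u^(p-2) := mul_le_mul_of_nonneg_left this hu
        have hu2 : u ^ (p-1) = u * u^(p-2) := by
          rw [show p-1 = 1+(p-2) by ring, Real.rpow_add hu0, Real.rpow_one]
        linarith
    nlinarith [hu1, hv1]

lemma pow_diff_lower (hp : 1 < p) {u v : ℝ} (hu : 0 ≤ u) (huv : u ≤ v) :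
    min (p-1) 1 * (v - u) * v ^ (p-2) ≤ v ^ (p-1) - u ^ (p-1) := by
  rcases eq_or_lt_of_le (hu.trans huv) with hv | hv
  · have hu0 : u = 0 := le_antisymm (huv.trans hv.symm.le) hu
    simp [← hv, hu0]
  rcases le_or_gt 2 p with h2 | h2
  · rw [min_eq_right (by linarith)]
    have hv1 : v ^ (p-1) = v * v^(p-2) := by
      rw [show p-1 = 1+(p-2) by ring, Real.rpow_add hv, Real.rpow_one]
    have hu1 : u^(p-1) ≤ u * v^(p-2) := by
      rcases eq_or_lt_of_le hu with rfl | hu0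
      · simp [Real.zero_rpow (show p-1 ≠ 0 by intro h; linarith)]
      · have : u^(p-2) ≤ v^(p-2) := Real.rpow_le_rpow hu huv (by linarith)
        have h3 : u * u^(p-2) ≤ u * v^(p-2) := mul_le_mul_of_nonneg_left this hu
        have hu2 : u ^ (p-1) = u * u^(p-2) := by
          rw [show p-1 = 1+(p-2) by ring, Real.rpow_add hu0, Real.rpow_one]
        linarith
    nlinarith [hu1, hv1]
  · rw [min_eq_left (by linarith)]
    have h := rpow_grad_le (q := p-1) (by linarith) (by linarith) hu hv
    rw [show p-1-1 = p-2 by ring] at h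
    linarith

lemma psi_nonneg_eq (hp : 1 < p) {t : ℝ} (ht : 0 ≤ t) : psiF p t = t ^ (p-1) := by
  rcases eq_or_lt_of_le ht with rfl | h
  · simp [psiF, Real.zero_rpow (show p-1 ≠ 0 by intro h; linarith)]
  · unfold psiF
    rw [abs_of_pos h, show p-1 = 1+(p-2) by ring, Real.rpow_add h, Real.rpow_one]

lemma psi_nonpos_eq (hp : 1 < p) {t : ℝ} (ht : t ≤ 0) : psiF p t = -((-t) ^ (p-1)) := by
  have h := psi_nonneg_eq hp (neg_nonneg.mpr ht)
  unfold psiF at h ⊢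
  rw [abs_neg] at h
  linarith [h]

lemma psi_sub_bounds (hp : 1 < p) {x y : ℝ} (hxy : x ≤ y) :
    min (p-1) 1 / 2 * (y - x) * (max |x| |y|) ^ (p-2) ≤ psiF p y - psiF p x ∧
    psiF p y - psiF p x ≤ (max (p-1) 1 + 1) * (y - x) * (max |x| |y|) ^ (p-2) := by
  have hmin0 : (0:ℝ) ≤ min (p-1) 1 := le_min (by linarith) zero_le_one
  have hmax1 : (1:ℝ) ≤ max (p-1) 1 := le_max_right _ _
  rcases le_or_gt 0 x with hx | hx
  · have hy : 0 ≤ y := hx.trans hxy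
    have hmax : max |x| |y| = y := by
      rw [abs_of_nonneg hx, abs_of_nonneg hy]; exact max_eq_right hxy
    rw [hmax, psi_nonneg_eq hp hx, psi_nonneg_eq hp hy]
    have h1 := pow_diff_lower hp hx hxy
    have h2 := pow_diff_upper hp hx hxy
    have hnn : 0 ≤ (y - x) * y ^ (p-2) :=
      mul_nonneg (by linarith) (Real.rpow_nonneg hy _)
    constructor
    · nlinarith [mul_nonneg hmin0 hnn]
    · nlinarith [hnn]
  · rcases le_or_gt y 0 with hy | hy
    · have hmax : max |x| |y| = -x := by
        rw [abs_of_nonpos hx.le, abs_of_nonpos hy]; exact max_eq_left (by linarith)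
      rw [hmax, psi_nonpos_eq hp hx.le, psi_nonpos_eq hp hy]
      have h1 := pow_diff_lower hp (neg_nonneg.mpr hy) (by linarith : -y ≤ -x)
      have h2 := pow_diff_upper hp (neg_nonneg.mpr hy) (by linarith : -y ≤ -x)
      have hnn : 0 ≤ (y - x) * (-x) ^ (p-2) :=
        mul_nonneg (by linarith) (Real.rpow_nonneg (by linarith) _)
      constructor
      · nlinarith [mul_nonneg hmin0 hnn]
      · nlinarith [hnn]
    · -- mixed: x < 0 < y
      have hx' : |x| = -x := abs_of_neg hx
      have hy' : |y| = y := abs_of_pos hy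
      set M := max |x| |y| with hMdef
      have hM0 : 0 < M := lt_of_lt_of_le hy (hy' ▸ le_max_right _ _)
      have hMy : y ≤ M := hy' ▸ le_max_right _ _
      have hMx : -x ≤ M := hx' ▸ le_max_left _ _
      have hMsum : M ≤ y - x := max_le (by rw [hx']; linarith) (by rw [hy']; linarith)
      have h2M : y - x ≤ 2*M := by linarith
      have hM1 : M ^ (p-1) = M * M^(p-2) := by
        rw [show p-1 = 1+(p-2) by ring, Real.rpow_add hM0, Real.rpow_one]
      rw [psi_nonneg_eq hp hy.le, psi_nonpos_eq hp hx.le]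
      have hyM : y ^ (p-1) ≤ M ^ (p-1) := Real.rpow_le_rpow hy.le hMy (by linarith)
      have hxM : (-x) ^ (p-1) ≤ M ^ (p-1) := Real.rpow_le_rpow (by linarith) hMx (by linarith)
      have hMmax : M ^ (p-1) ≤ y ^ (p-1) + (-x) ^ (p-1) := by
        rcases max_choice |x| |y| with h | h
        · rw [← hMdef] at h
          rw [h, hx']
          have : (0:ℝ) ≤ y ^ (p-1) := Real.rpow_nonneg hy.le _
          linarith
        · rw [← hMdef] at h
          rw [h, hy']
          have : (0:ℝ) ≤ (-x) ^ (p-1) := Real.rpow_nonneg (by linarith) _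
          linarith
      have hP2 : (0:ℝ) ≤ M ^ (p-2) := Real.rpow_nonneg hM0.le _
      constructor
      · -- min/2*(y-x)*M^(p-2) ≤ y^(p-1) + (-x)^(p-1)
        have hmin1 : min (p-1) 1 ≤ 1 := min_le_right _ _
        nlinarith [mul_le_mul_of_nonneg_right h2M hP2,
          mul_le_mul_of_nonneg_right (mul_le_mul_of_nonneg_right hmin1 (by linarith : (0:ℝ) ≤ y - x)) hP2]
      · nlinarith [mul_le_mul_of_nonneg_right hMsum hP2,
          mul_le_mul_of_nonneg_right (mul_le_mul_of_nonneg_right hmax1 (by linarith : (0:ℝ) ≤ y - x)) hP2]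

lemma Fp_nonneg (hp : 1 < p) (a b : ℝ) :
    0 ≤ |b| ^ p - |a| ^ p - p * a * |a| ^ (p-2) * (b - a) := by
  rcases eq_or_ne a 0 with rfl | ha
  · simp [Real.zero_rpow (show p ≠ 0 by intro h; linarith)]
    positivity
  · have ha' : 0 < |a| := abs_pos.mpr ha
    have h1 := rpow_grad_ge (q := p) hp.le (abs_nonneg b) ha'
    -- |a|^p + p*(|b|-|a|)*|a|^(p-1) ≤ |b|^p
    have hA : |a| ^ (p-1) = |a| * |a| ^ (p-2) := by
      rw [show p-1 = 1+(p-2) by ring, Real.rpow_add ha', Real.rpow_one]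
    rw [hA] at h1
    have hab : a * b ≤ |a| * |b| := by
      calc a * b ≤ |a * b| := le_abs_self _
        _ = |a| * |b| := abs_mul a b
    have haa : a * a = |a| * |a| := (abs_mul_abs_self a).symm
    have hP2 : (0:ℝ) ≤ |a| ^ (p-2) := Real.rpow_nonneg (abs_nonneg a) _
    have h2 : a * (b - a) * |a|^(p-2) ≤ (|a| * |b| - |a| * |a|) * |a|^(p-2) := by
      apply mul_le_mul_of_nonneg_right _ hP2
      nlinarith [hab, haa]
    nlinarith [h1, h2, hp]

end FTwoAux

set_option maxHeartbeats 1000000 in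
open FTwoAux in
/-- For every `p > 1` there are constants `0 < c_p ≤ C_p < ∞` with
`c_p (b-a)^2 (|a| ⊔ |b|)^(p-2) ≤ F(a,b) ≤ C_p (b-a)^2 (|a| ⊔ |b|)^(p-2)`
for all real `a, b`, where `F(a,b) = |b|^p - |a|^p - p a |a|^(p-2) (b-a)`. -/
theorem F_two_sided_bound (p : ℝ) (hp : 1 < p) :
    ∃ c C : ℝ, 0 < c ∧ c ≤ C ∧ ∀ a b : ℝ,
      c * (b - a) ^ 2 * (max |a| |b|) ^ (p - 2)
        ≤ |b| ^ p - |a| ^ p - p * a * |a| ^ (p - 2) * (b - a) ∧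
      |b| ^ p - |a| ^ p - p * a * |a| ^ (p - 2) * (b - a)
        ≤ C * (b - a) ^ 2 * (max |a| |b|) ^ (p - 2) := by
  have hp0 : (0:ℝ) < p := by linarith
  have hmin0 : (0:ℝ) < min (p-1) 1 := lt_min (by linarith) one_pos
  have hmin1 : min (p-1) 1 ≤ 1 := min_le_right _ _
  have hmax1 : (1:ℝ) ≤ max (p-1) 1 := le_max_right _ _
  have hκ0 : (0:ℝ) < min ((3:ℝ)^(2-p)) 1 := lt_min (Real.rpow_pos_of_pos (by norm_num) _) one_pos
  have hκ1 : min ((3:ℝ)^(2-p)) 1 ≤ 1 := min_le_right _ _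
  refine ⟨p * min (p-1) 1 / 8 * min ((3:ℝ)^(2-p)) 1, p * (max (p-1) 1 + 1), ?_, ?_, ?_⟩
  · exact mul_pos (div_pos (mul_pos hp0 hmin0) (by norm_num)) hκ0
  · have e1 := mul_le_mul_of_nonneg_left hκ1
      (le_of_lt (div_pos (mul_pos hp0 hmin0) (by norm_num : (0:ℝ) < 8)))
    have e2 := mul_le_mul_of_nonneg_left hmin1 hp0.le
    have e3 := mul_le_mul_of_nonneg_left (show (2:ℝ) ≤ max (p-1) 1 + 1 by linarith) hp0.le
    nlinarith [e1, e2, e3, hp0]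
  intro a b
  rcases eq_or_ne b a with rfl | hab
  · norm_num
  have hM0 : 0 < max |a| |b| := by
    rcases eq_or_ne a 0 with rfl | ha
    · have hb : b ≠ 0 := by simpa using hab
      calc (0:ℝ) < |b| := abs_pos.mpr hb
        _ ≤ _ := le_max_right _ _
    · calc (0:ℝ) < |a| := abs_pos.mpr ha
        _ ≤ _ := le_max_left _ _
  have hMP2 : (0:ℝ) ≤ (max |a| |b|) ^ (p-2) := Real.rpow_nonneg hM0.le _
  constructor
  · -- LOWER BOUND
    set m : ℝ := (a+b)/2 with hmdef
    have hmid : |b| ^ p - |a| ^ p - p * a * |a| ^ (p-2) * (b - a)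
        = (|m| ^ p - |a| ^ p - p * a * |a| ^ (p-2) * (m - a))
        + (|b| ^ p - |m| ^ p - p * m * |m| ^ (p-2) * (b - m))
        + p * (psiF p m - psiF p a) * ((b-a)/2) := by
      unfold psiF; simp only [hmdef]; ring
    have hmid' := Fp_nonneg hp a m
    have hmid'' := Fp_nonneg hp m b
    have hMam0 : 0 < max |a| |m| := by
      by_contra h
      push_neg at h
      have h1 : |a| = 0 := le_antisymm ((le_max_left _ _).trans h) (abs_nonneg a)
      have h2 : |m| = 0 := le_antisymm ((le_max_right _ _).trans h) (abs_nonneg m)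
      rw [abs_eq_zero] at h1 h2
      apply hab
      simp only [hmdef] at h2
      linarith
    have hMam_le : max |a| |m| ≤ max |a| |b| := by
      apply max_le (le_max_left _ _)
      calc |m| = |a+b|/2 := by rw [hmdef, abs_div]; norm_num
        _ ≤ (|a|+|b|)/2 := by linarith [abs_add_le a b]
        _ ≤ max |a| |b| := by
            have := le_max_left |a| |b|; have := le_max_right |a| |b|; linarith
    have hM_le3 : max |a| |b| ≤ 3 * max |a| |m| := by
      apply max_le
      · linarith [le_max_left |a| |m|, hMam0]
      · have hb : b = 2*m - a := by rw [hmdef]; ring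
        calc |b| = |2*m - a| := by rw [← hb]
          _ ≤ |2*m| + |a| := abs_sub _ _
          _ = 2*|m| + |a| := by rw [abs_mul]; norm_num
          _ ≤ 3 * max |a| |m| := by
              linarith [le_max_left |a| |m|, le_max_right |a| |m|]
    have hκbound : min ((3:ℝ)^(2-p)) 1 * (max |a| |b|) ^ (p-2) ≤ (max |a| |m|) ^ (p-2) := by
      rcases le_or_gt 2 p with h2 | h2
      · have hdiv : max |a| |b| / 3 ≤ max |a| |m| := by linarith
        have hstep : (max |a| |b| / 3) ^ (p-2) ≤ (max |a| |m|) ^ (p-2) :=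
          Real.rpow_le_rpow (by positivity) hdiv (by linarith)
        have heq : (max |a| |b| / 3) ^ (p-2) = (3:ℝ)^(2-p) * (max |a| |b|) ^ (p-2) := by
          rw [Real.div_rpow hM0.le (by norm_num), show (2:ℝ)-p = -(p-2) by ring,
            Real.rpow_neg (by norm_num)]
          ring
        have hκle := mul_le_mul_of_nonneg_right (min_le_left ((3:ℝ)^(2-p)) 1) hMP2
        rw [heq] at hstep
        linarith
      · have hstep : (max |a| |b|) ^ (p-2) ≤ (max |a| |m|) ^ (p-2) :=
          Real.rpow_le_rpow_of_nonpos hMam0 hMam_le (by linarith)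
        have := mul_le_mul_of_nonneg_right hκ1 hMP2
        linarith
    rcases lt_or_gt_of_ne hab with hlt | hgt
    · -- b < a : use x = m, y = a
      have hma : m ≤ a := by rw [hmdef]; linarith
      have hψ := (psi_sub_bounds hp hma).1
      rw [max_comm |m| |a|] at hψ
      rw [show a - m = (a-b)/2 by rw [hmdef]; ring] at hψ
      have hba : (0:ℝ) ≤ (a-b)/2 := by linarith
      have hmul := mul_le_mul_of_nonneg_right hψ hba
      have hpmul := mul_le_mul_of_nonneg_left hmul hp0.le
      have hnn : (0:ℝ) ≤ p * (min (p-1) 1 / 2 * ((a-b)/2) * ((a-b)/2)) := by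
        apply mul_nonneg hp0.le
        exact mul_nonneg (mul_nonneg (by linarith) hba) hba
      have hκmul := mul_le_mul_of_nonneg_left hκbound hnn
      rw [hmid]
      linarith [hmid', hmid'', hpmul, hκmul]
    · -- a < b : use x = a, y = m
      have ham : a ≤ m := by rw [hmdef]; linarith
      have hψ := (psi_sub_bounds hp ham).1
      rw [show m - a = (b-a)/2 by rw [hmdef]; ring] at hψ
      have hba : (0:ℝ) ≤ (b-a)/2 := by linarith
      have hmul := mul_le_mul_of_nonneg_right hψ hba
      have hpmul := mul_le_mul_of_nonneg_left hmul hp0.le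
      have hnn : (0:ℝ) ≤ p * (min (p-1) 1 / 2 * ((b-a)/2) * ((b-a)/2)) := by
        apply mul_nonneg hp0.le
        exact mul_nonneg (mul_nonneg (by linarith) hba) hba
      have hκmul := mul_le_mul_of_nonneg_left hκbound hnn
      rw [hmid]
      linarith [hmid', hmid'', hpmul, hκmul]
  · -- UPPER BOUND
    have hchord : |b| ^ p - |a| ^ p - p * a * |a| ^ (p-2) * (b - a)
        ≤ p * (psiF p b - psiF p a) * (b-a) := by
      have h := Fp_nonneg hp b a
      have hiden : (|b| ^ p - |a| ^ p - p * a * |a| ^ (p-2) * (b - a))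
          + (|a| ^ p - |b| ^ p - p * b * |b| ^ (p-2) * (a - b))
          = p * (psiF p b - psiF p a) * (b-a) := by unfold psiF; ring
      linarith
    rcases lt_or_gt_of_ne hab with hlt | hgt
    · -- b < a
      have hψ := (psi_sub_bounds hp hlt.le).2
      rw [max_comm |b| |a|] at hψ
      have hmul := mul_le_mul_of_nonneg_right hψ (by linarith : (0:ℝ) ≤ a - b)
      have hpmul := mul_le_mul_of_nonneg_left hmul hp0.le
      linarith [hchord, hpmul]
    · -- a < b
      have hψ := (psi_sub_bounds hp hgt.le).2
      have hmul := mul_le_mul_of_nonneg_right hψ (by linarith : (0:ℝ) ≤ b - a)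
      have hpmul := mul_le_mul_of_nonneg_left hmul hp0.le
      linarith [hchord, hpmul]
end

section
/- For 1 < p < 2 and all real ε, a, b, one has 0 ≤ F_ε(a,b) ≤ (1/(p-1))·F(a,b), where F_ε(a,b) = (b²+ε²)^{p/2} - (a²+ε²)^{p/2} - p·a·(a²+ε²)^{(p-2)/2}(b-a) and F(a,b) = |b|^p - |a|^p - p·a·|a|^{p-2}(b-a). -/
open Real Set

private lemma sq_rpow_half (x t : ℝ) : (x ^ 2) ^ (t / 2) = |x| ^ t := by
  rw [← sq_abs, ← Real.rpow_natCast |x| 2, ← Real.rpow_mul (abs_nonneg x)]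
  push_cast
  rw [show (2:ℝ) * (t / 2) = t by ring]

private lemma deriv_phi {p c : ℝ} (hp1 : 1 < p) (hp2 : p < 2) (hc : 0 ≤ c) (x : ℝ) :
    HasDerivAt (fun y : ℝ => (y ^ 2 + c) ^ (p / 2))
      (p * x * (x ^ 2 + c) ^ ((p - 2) / 2)) x := by
  rcases eq_or_lt_of_le (by positivity : (0:ℝ) ≤ x ^ 2 + c) with h | h
  · -- x = 0, c = 0
    have hx : x = 0 := by nlinarith [sq_nonneg x]
    have hc0 : c = 0 := by nlinarith [sq_nonneg x]
    subst hx hc0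
    rw [hasDerivAt_iff_tendsto_slope]
    have hval : p * 0 * ((0:ℝ) ^ 2 + 0) ^ ((p - 2) / 2) = 0 := by ring
    rw [hval]
    apply squeeze_zero_norm (a := fun y : ℝ => |y| ^ (p - 1))
    · intro y
      rcases eq_or_ne y 0 with rfl | hy
      · simp only [slope_same, norm_zero]
        exact Real.rpow_nonneg (abs_nonneg 0) _
      · have : slope (fun y : ℝ => (y ^ 2 + 0) ^ (p / 2)) 0 y
            = |y| ^ p / y := by
          simp [slope, Real.zero_rpow (show p / 2 ≠ 0 by positivity), sq_rpow_half]
          ring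
        rw [this, Real.rpow_sub (abs_pos.mpr hy), Real.rpow_one]
        rw [norm_div, Real.norm_eq_abs, Real.norm_eq_abs,
          abs_of_nonneg (Real.rpow_nonneg (abs_nonneg y) p)]
    · have h1 : ContinuousAt (fun y : ℝ => |y| ^ (p - 1)) 0 := by
        exact (Real.continuousAt_rpow_const _ _ (Or.inr (by linarith))).comp
          continuous_abs.continuousAt
      have h2 := h1.tendsto
      have h0 : |(0:ℝ)| ^ (p - 1) = 0 := by
        rw [abs_zero]; exact Real.zero_rpow (by linarith)
      rw [h0] at h2
      exact h2.mono_left nhdsWithin_le_nhds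
  · have h1 : HasDerivAt (fun y : ℝ => y ^ 2 + c) (2 * x) x := by
      simpa using (hasDerivAt_pow 2 x).add_const c
    have h2 := h1.rpow_const (p := p / 2) (Or.inl h.ne')
    convert h2 using 1
    rw [show p / 2 - 1 = (p - 2) / 2 by ring]
    ring

private lemma odd_mono {f : ℝ → ℝ} (h0 : f 0 = 0) (hpos : ∀ x, 0 < x → 0 ≤ f x)
    (hm : MonotoneOn f (Set.Ioi 0)) (hodd : ∀ x, f (-x) = - f x) : Monotone f := by
  intro x y hxy
  rcases lt_trichotomy x 0 with hx | rfl | hx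
  · have hfx : f x ≤ 0 := by
      have := hpos (-x) (by linarith)
      have hx2 := hodd (-x); rw [neg_neg] at hx2
      linarith
    rcases lt_trichotomy y 0 with hy | rfl | hy
    · have h1 : f (-y) ≤ f (-x) := hm (by simp [Set.mem_Ioi]; linarith)
        (by simp [Set.mem_Ioi]; linarith) (by linarith)
      have := hodd x; have := hodd y
      linarith [hodd x, hodd y]
    · linarith
    · linarith [hpos y hy]
  · rcases eq_or_lt_of_le hxy with rfl | hy
    · exact le_refl _
    · rw [h0]; exact hpos y hy
  · exact hm (Set.mem_Ioi.2 hx) (Set.mem_Ioi.2 (lt_of_lt_of_le hx hxy)) hxy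

private lemma deriv_d {p c : ℝ} (hp1 : 1 < p) (hp2 : p < 2) (hc : 0 ≤ c) {x : ℝ}
    (hx : 0 < x ^ 2 + c) :
    HasDerivAt (fun y : ℝ => y * (y ^ 2 + c) ^ ((p - 2) / 2))
      ((x ^ 2 + c) ^ ((p - 2) / 2 - 1) * ((p - 1) * x ^ 2 + c)) x := by
  have h1 : HasDerivAt (fun y : ℝ => y ^ 2 + c) (2 * x) x := by
    simpa using (hasDerivAt_pow 2 x).add_const c
  have h2 := h1.rpow_const (p := (p - 2) / 2) (Or.inl hx.ne')
  have h3 := (hasDerivAt_id x).mul h2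
  refine h3.congr_deriv ?_
  have key : (x ^ 2 + c) ^ ((p - 2) / 2) = (x ^ 2 + c) ^ ((p - 2) / 2 - 1) * (x ^ 2 + c) := by
    rw [← Real.rpow_add_one hx.ne']; ring_nf
  rw [key]; simp only [id_eq]; ring

private lemma mono_d {p c : ℝ} (hp1 : 1 < p) (hp2 : p < 2) (hc : 0 ≤ c) :
    Monotone (fun x : ℝ => x * (x ^ 2 + c) ^ ((p - 2) / 2)) := by
  apply odd_mono (hodd := fun x => by rw [show (-x) ^ 2 = x ^ 2 by ring]; ring)
  · simp
  · intro x hx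
    positivity
  · have hd : ∀ x ∈ interior (Set.Ioi (0:ℝ)), HasDerivAt
        (fun y : ℝ => y * (y ^ 2 + c) ^ ((p - 2) / 2))
        ((x ^ 2 + c) ^ ((p - 2) / 2 - 1) * ((p - 1) * x ^ 2 + c)) x := by
      intro x hx
      rw [interior_Ioi] at hx
      exact deriv_d hp1 hp2 hc (by have := Set.mem_Ioi.1 hx; positivity)
    apply monotoneOn_of_deriv_nonneg (convex_Ioi 0)
    · intro x hx
      exact ((hd x (by rwa [interior_Ioi])).continuousAt).continuousWithinAt
    · intro x hx
      exact (hd x hx).differentiableAt.differentiableWithinAt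
    · intro x hx
      rw [(hd x hx).deriv]
      rw [interior_Ioi] at hx
      have h1 : (0:ℝ) < (x ^ 2 + c) ^ ((p - 2) / 2 - 1) :=
        Real.rpow_pos_of_pos (by have := Set.mem_Ioi.1 hx; positivity) _
      have h2 : 0 ≤ (p - 1) * x ^ 2 + c := by nlinarith [sq_nonneg x]
      positivity

private lemma tangent_le {f g : ℝ → ℝ} (hf : ∀ x, HasDerivAt f (g x) x) (hg : Monotone g)
    (a b : ℝ) : f a + g a * (b - a) ≤ f b := by
  rcases lt_trichotomy a b with hab | rfl | hab
  · obtain ⟨c, hc, hc2⟩ := exists_deriv_eq_slope f hab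
      (fun x _ => (hf x).continuousAt.continuousWithinAt)
      (fun x _ => (hf x).differentiableAt.differentiableWithinAt)
    rw [(hf c).deriv] at hc2
    have h1 : g a ≤ g c := hg hc.1.le
    rw [eq_div_iff (sub_ne_zero.2 hab.ne')] at hc2
    nlinarith [mul_le_mul_of_nonneg_right h1 (by linarith : (0:ℝ) ≤ b - a)]
  · simp
  · obtain ⟨c, hc, hc2⟩ := exists_deriv_eq_slope f hab
      (fun x _ => (hf x).continuousAt.continuousWithinAt)
      (fun x _ => (hf x).differentiableAt.differentiableWithinAt)
    rw [(hf c).deriv] at hc2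
    have h1 : g c ≤ g a := hg hc.2.le
    rw [eq_div_iff (sub_ne_zero.2 hab.ne')] at hc2
    nlinarith [mul_le_mul_of_nonneg_right h1 (by linarith : (0:ℝ) ≤ a - b)]

private lemma mono_m {p c : ℝ} (hp1 : 1 < p) (hp2 : p < 2) (hc : 0 ≤ c) :
    Monotone (fun x : ℝ => 1 / (p - 1) * (x * (x ^ 2) ^ ((p - 2) / 2))
      - x * (x ^ 2 + c) ^ ((p - 2) / 2)) := by
  have hq : (p - 2) / 2 ≤ 0 := by linarith
  apply odd_mono (hodd := fun x => by rw [show (-x) ^ 2 = x ^ 2 by ring]; ring)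
  · simp
  · -- 0 ≤ f x for x > 0
    intro x hx
    have hx2 : (0:ℝ) < x ^ 2 := by positivity
    have h1 : (x ^ 2 + c) ^ ((p - 2) / 2) ≤ (x ^ 2) ^ ((p - 2) / 2) :=
      Real.rpow_le_rpow_of_nonpos hx2 (by linarith) hq
    have h2 : (1:ℝ) ≤ 1 / (p - 1) := by
      rw [le_div_iff₀ (by linarith)]; linarith
    have h3 : 0 ≤ x * (x ^ 2 + c) ^ ((p - 2) / 2) := by positivity
    nlinarith [mul_le_mul_of_nonneg_left h1 hx.le]
  · -- MonotoneOn on Ioi 0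
    have hd : ∀ x ∈ interior (Set.Ioi (0:ℝ)), HasDerivAt
        (fun x : ℝ => 1 / (p - 1) * (x * (x ^ 2) ^ ((p - 2) / 2))
          - x * (x ^ 2 + c) ^ ((p - 2) / 2))
        (1 / (p - 1) * ((x ^ 2) ^ ((p - 2) / 2 - 1) * ((p - 1) * x ^ 2))
          - (x ^ 2 + c) ^ ((p - 2) / 2 - 1) * ((p - 1) * x ^ 2 + c)) x := by
      intro x hx
      rw [interior_Ioi] at hx
      have hx0 : (0:ℝ) < x := hx
      have h1 := deriv_d hp1 hp2 (le_refl 0) (x := x) (by positivity)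
      simp only [add_zero] at h1
      have h2 := deriv_d hp1 hp2 hc (x := x) (by positivity)
      exact (h1.const_mul (1 / (p - 1))).sub h2
    apply monotoneOn_of_deriv_nonneg (convex_Ioi 0)
    · intro x hx
      exact ((hd x (by rwa [interior_Ioi])).continuousAt).continuousWithinAt
    · intro x hx
      exact (hd x hx).differentiableAt.differentiableWithinAt
    · intro x hx
      rw [(hd x hx).deriv]
      rw [interior_Ioi] at hx
      have hx0 : (0:ℝ) < x := hx
      have hx2 : (0:ℝ) < x ^ 2 := by positivity
      have hA : (0:ℝ) < (x ^ 2) ^ ((p - 2) / 2 - 1) := Real.rpow_pos_of_pos hx2 _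
      have hB : (0:ℝ) < (x ^ 2 + c) ^ ((p - 2) / 2 - 1) :=
        Real.rpow_pos_of_pos (by positivity) _
      have key1 : (x ^ 2) ^ ((p - 2) / 2 - 1) * (x ^ 2) = (x ^ 2) ^ ((p - 2) / 2) := by
        rw [← Real.rpow_add_one hx2.ne']; ring_nf
      have key2 : (x ^ 2 + c) ^ ((p - 2) / 2 - 1) * (x ^ 2 + c)
          = (x ^ 2 + c) ^ ((p - 2) / 2) := by
        rw [← Real.rpow_add_one (by positivity : (x ^ 2 + c) ≠ 0)]; ring_nf
      have key3 : (x ^ 2 + c) ^ ((p - 2) / 2) ≤ (x ^ 2) ^ ((p - 2) / 2) :=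
        Real.rpow_le_rpow_of_nonpos hx2 (by linarith) (by linarith)
      have hstep : (x ^ 2 + c) ^ ((p - 2) / 2 - 1) * ((p - 1) * x ^ 2 + c)
          ≤ (x ^ 2 + c) ^ ((p - 2) / 2) := by
        rw [← key2]
        apply mul_le_mul_of_nonneg_left _ hB.le
        nlinarith
      have hmain : 1 / (p - 1) * ((x ^ 2) ^ ((p - 2) / 2 - 1) * ((p - 1) * x ^ 2))
          = (x ^ 2) ^ ((p - 2) / 2) := by
        have hne : p - 1 ≠ 0 := by linarith
        rw [← key1]; field_simp
      rw [hmain]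
      linarith

/-- For `1 < p < 2` and all real `ε, a, b`:
`0 ≤ F_ε(a,b) ≤ (1/(p-1)) F(a,b)`, where
`F_ε(a,b) = (b²+ε²)^(p/2) - (a²+ε²)^(p/2) - p a (a²+ε²)^((p-2)/2) (b-a)` and
`F(a,b) = |b|^p - |a|^p - p a |a|^(p-2) (b-a)`. -/
theorem Feps_le_F (p : ℝ) (hp1 : 1 < p) (hp2 : p < 2) (ε a b : ℝ) :
    0 ≤ (b ^ 2 + ε ^ 2) ^ (p / 2) - (a ^ 2 + ε ^ 2) ^ (p / 2)
        - p * a * (a ^ 2 + ε ^ 2) ^ ((p - 2) / 2) * (b - a) ∧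
    (b ^ 2 + ε ^ 2) ^ (p / 2) - (a ^ 2 + ε ^ 2) ^ (p / 2)
        - p * a * (a ^ 2 + ε ^ 2) ^ ((p - 2) / 2) * (b - a)
      ≤ (1 / (p - 1)) * (|b| ^ p - |a| ^ p - p * a * |a| ^ (p - 2) * (b - a)) := by
  have hc : (0:ℝ) ≤ ε ^ 2 := sq_nonneg ε
  have hp0 : (0:ℝ) < p := by linarith
  constructor
  · -- first inequality
    have hf : ∀ x, HasDerivAt (fun y : ℝ => (y ^ 2 + ε ^ 2) ^ (p / 2))
        (p * (x * (x ^ 2 + ε ^ 2) ^ ((p - 2) / 2))) x := fun x => by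
      have := deriv_phi hp1 hp2 hc x
      convert this using 1; ring
    have hg : Monotone (fun x : ℝ => p * (x * (x ^ 2 + ε ^ 2) ^ ((p - 2) / 2))) :=
      (mono_d hp1 hp2 hc).const_mul hp0.le
    have := tangent_le hf hg a b
    nlinarith [this]
  · -- second inequality
    rw [← sq_rpow_half b p, ← sq_rpow_half a p, ← sq_rpow_half a (p - 2)]
    have hf : ∀ x, HasDerivAt
        (fun y : ℝ => 1 / (p - 1) * (y ^ 2) ^ (p / 2) - (y ^ 2 + ε ^ 2) ^ (p / 2))
        (p * (1 / (p - 1) * (x * (x ^ 2) ^ ((p - 2) / 2))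
          - x * (x ^ 2 + ε ^ 2) ^ ((p - 2) / 2))) x := fun x => by
      have h1 := deriv_phi hp1 hp2 (le_refl 0) (x := x)
      simp only [add_zero] at h1
      have h2 := deriv_phi hp1 hp2 hc (x := x)
      have h3 := (h1.const_mul (1 / (p - 1))).sub h2
      refine h3.congr_deriv ?_; ring
    have hg : Monotone (fun x : ℝ => p * (1 / (p - 1) * (x * (x ^ 2) ^ ((p - 2) / 2))
        - x * (x ^ 2 + ε ^ 2) ^ ((p - 2) / 2))) :=
      (mono_m hp1 hp2 hc).const_mul hp0.le
    have := tangent_le hf hg a b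
    nlinarith [this]
end
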